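/- Let T be a tree of order n ≥ 2. Then the conflict-free connection number of T satisfies cfc(T) ≥ ⌈log₂ n⌉. -/

import Mathlib

open SimpleGraph

/-- An edge-coloring `c` with `k` colors makes `G` conflict-free connected if every two
distinct vertices are joined by a path on which some color appears on exactly one edge. -/
def SimpleGraph.IsCFCColoring {V : Type*} (G : SimpleGraph V) {k : ℕ}
    (c : Sym2 V → Fin k) : Prop :=
  ∀ u v : V, u ≠ v → ∃ p : G.Walk u v, p.IsPath ∧
    ∃ col : Fin k, (p.edges.map c).count col = 1

/-- The conflict-free connection number of `G`: the smallest number of colors in an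
edge-coloring of `G` that makes `G` conflict-free connected. -/
noncomputable def SimpleGraph.cfc {V : Type*} (G : SimpleGraph V) : ℕ :=
  sInf {k | ∃ c : Sym2 V → Fin k, G.IsCFCColoring c}

section Aux

variable {V : Type*} {T : SimpleGraph V}

/-- The unique path between two vertices of a tree. -/
noncomputable def treePath (hT : T.IsTree) (a b : V) : T.Walk a b :=
  (hT.existsUnique_path a b).choose

lemma treePath_isPath (hT : T.IsTree) (a b : V) : (treePath hT a b).IsPath :=
  (hT.existsUnique_path a b).choose_spec.1

lemma treePath_unique (hT : T.IsTree) {a b : V} (p : T.Walk a b) (hp : p.IsPath) :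
    p = treePath hT a b :=
  (hT.existsUnique_path a b).choose_spec.2 p hp

lemma loop_path_nil {a : V} (p : T.Walk a a) (hp : p.IsPath) : p = SimpleGraph.Walk.nil := by
  cases p with
  | nil => rfl
  | cons h q =>
    exfalso
    rw [SimpleGraph.Walk.cons_isPath_iff] at hp
    exact hp.2 q.end_mem_support

/-- Parity lemma: the color count along any walk agrees mod 2 with that along the tree path. -/
lemma parity_lemma (hT : T.IsTree) {k : ℕ} (c : Sym2 V → Fin k) {a b : V}
    (w : T.Walk a b) (col : Fin k) :
    ((w.edges.map c).count col) % 2 = (((treePath hT a b).edges.map c).count col) % 2 := by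
  classical
  induction w with
  | nil =>
    rw [← treePath_unique hT SimpleGraph.Walk.nil SimpleGraph.Walk.IsPath.nil]
  | @cons a x b h w' ih =>
    by_cases hmem : a ∈ (treePath hT x b).support
    · -- treePath x b passes through a
      have hsplit := (treePath hT x b).take_spec hmem
      have htake : ((treePath hT x b).takeUntil a hmem) = treePath hT x a :=
        treePath_unique hT _ ((treePath_isPath hT x b).takeUntil hmem)
      have hdrop : ((treePath hT x b).dropUntil a hmem) = treePath hT a b :=
        treePath_unique hT _ ((treePath_isPath hT x b).dropUntil hmem)
      -- the path from x to a is the single edge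
      have hedge : treePath hT x a = (SimpleGraph.Walk.cons h SimpleGraph.Walk.nil).reverse := by
        refine (treePath_unique hT _ ?_).symm
        apply SimpleGraph.Walk.IsPath.reverse
        rw [SimpleGraph.Walk.cons_isPath_iff]
        exact ⟨SimpleGraph.Walk.IsPath.nil, by simpa using h.ne⟩
      have hedges : (treePath hT x b).edges = s(a, x) :: (treePath hT a b).edges := by
        rw [← hsplit, SimpleGraph.Walk.edges_append, htake, hdrop, hedge,
          SimpleGraph.Walk.edges_reverse]
        simp
      have ih' := ih
      have hcount : ((treePath hT x b).edges.map c).count col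
          = (if c s(a, x) = col then 1 else 0) + ((treePath hT a b).edges.map c).count col := by
        rw [hedges]; simp [List.count_cons]; split <;> omega
      have hLHS : (((SimpleGraph.Walk.cons h w').edges.map c).count col)
          = (w'.edges.map c).count col + (if c s(a, x) = col then 1 else 0) := by
        rw [SimpleGraph.Walk.edges_cons]; simp [List.count_cons]
      rw [hLHS]
      omega
    · have : SimpleGraph.Walk.cons h (treePath hT x b) = treePath hT a b := by
        refine treePath_unique hT _ ?_
        rw [SimpleGraph.Walk.cons_isPath_iff]
        exact ⟨treePath_isPath hT x b, hmem⟩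
      rw [← this]
      simp only [SimpleGraph.Walk.edges_cons, List.map_cons, List.count_cons]
      omega

end Aux

/-- If `T` is a tree of order `n ≥ 2`, then `cfc(T) ≥ ⌈log₂ n⌉`. -/
theorem stmt_3 {V : Type*} [Fintype V] (T : SimpleGraph V) (hT : T.IsTree)
    (hn : 2 ≤ Fintype.card V) : Nat.clog 2 (Fintype.card V) ≤ T.cfc := by
  classical
  have hne : Nonempty V := Fintype.card_pos_iff.mp (by omega)
  obtain ⟨r⟩ := hne
  -- the defining set is nonempty: color all pairs with distinct colors
  have hnonempty : {k | ∃ c : Sym2 V → Fin k, T.IsCFCColoring c}.Nonempty := by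
    refine ⟨Fintype.card (Sym2 V), (Fintype.equivFin (Sym2 V) : Sym2 V → Fin _), ?_⟩
    intro u v huv
    obtain ⟨w⟩ := hT.isConnected.preconnected u v
    refine ⟨w.toPath, w.toPath.2, ?_⟩
    have hpath : (w.toPath : T.Walk u v).IsPath := w.toPath.2
    have hnn : ¬ (w.toPath : T.Walk u v).Nil := SimpleGraph.Walk.not_nil_of_ne huv
    obtain ⟨x, hadj, q, hpq⟩ := SimpleGraph.Walk.not_nil_iff.mp hnn
    have hel : s(u, x) ∈ (w.toPath : T.Walk u v).edges := by
      rw [hpq, SimpleGraph.Walk.edges_cons]; exact List.mem_cons_self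
    refine ⟨Fintype.equivFin (Sym2 V) s(u, x), ?_⟩
    have hnodup : ((w.toPath : T.Walk u v).edges.map (Fintype.equivFin (Sym2 V))).Nodup :=
      hpath.edges_nodup.map (Fintype.equivFin (Sym2 V)).injective
    exact List.count_eq_one_of_mem hnodup (List.mem_map_of_mem hel)
  refine le_csInf hnonempty ?_
  rintro k ⟨c, hc⟩
  -- define the parity vector of each vertex
  set f : V → (Fin k → ZMod 2) :=
    fun v col => ((((treePath hT r v).edges.map c).count col : ℕ) : ZMod 2) with hf
  have hinj : Function.Injective f := by
    intro u v huvf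
    by_contra hne'
    obtain ⟨p, hp, col, hcol⟩ := hc u v hne'
    have h1 := parity_lemma hT c ((treePath hT r u).append p) col
    rw [SimpleGraph.Walk.edges_append, List.map_append, List.count_append, hcol] at h1
    have h2 : (((treePath hT r u).edges.map c).count col) % 2
        = (((treePath hT r v).edges.map c).count col) % 2 := by
      have := congrFun huvf col
      rwa [hf, ZMod.natCast_eq_natCast_iff'] at this
    omega
  have hcard : Fintype.card V ≤ 2 ^ k := by
    calc Fintype.card V ≤ Fintype.card (Fin k → ZMod 2) := Fintype.card_le_of_injective f hinj
    _ = 2 ^ k := by simp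
  exact (Nat.clog_le_iff_le_pow (by norm_num)).mpr hcard
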